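/- Let X ∈ ℝ^{d×N}, ε > 0, and let X̃_p be any matrix of rank at most p with ‖X − X̃_p‖₂ ≤ (1+ε)σ_{p+1}(X). If (Ã, B̃) minimizes ‖X̃_p − X̃_p A B‖_F over column stochastic A ∈ ℝ^{N×k}, B ∈ ℝ^{k×N}, then (1/√N)‖X − XÃB̃‖_F ≤ opt(X) + 4(1+ε)σ_{p+1}(X). -/

import Mathlib

open Matrix

def ColStoch {m n : Type*} [Fintype m] [Fintype n] (M : Matrix m n ℝ) : Prop :=
  (∀ i j, 0 ≤ M i j) ∧ ∀ j, ∑ i, M i j = 1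

noncomputable def frob {m n : Type*} [Fintype m] [Fintype n] (M : Matrix m n ℝ) : ℝ :=
  Real.sqrt (∑ i, ∑ j, (M i j) ^ 2)

noncomputable def spec {m n : ℕ} (M : Matrix (Fin m) (Fin n) ℝ) : ℝ :=
  ‖LinearMap.toContinuousLinearMap (Matrix.toEuclideanLin M)‖

noncomputable def opt {d N : ℕ} (k : ℕ) (X : Matrix (Fin d) (Fin N) ℝ) : ℝ :=
  sInf {c | ∃ A : Matrix (Fin N) (Fin k) ℝ, ∃ B : Matrix (Fin k) (Fin N) ℝ,
    ColStoch A ∧ ColStoch B ∧ c = (1 / Real.sqrt N) * frob (X - X * A * B)}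

/-- `(p+1)`-st singular value, via Eckart–Young. -/
noncomputable def sigmaSucc {d N : ℕ} (p : ℕ) (X : Matrix (Fin d) (Fin N) ℝ) : ℝ :=
  sInf {c | ∃ Y : Matrix (Fin d) (Fin N) ℝ, Y.rank ≤ p ∧ c = spec (X - Y)}

namespace AAaux

variable {d N : ℕ}

/-- `j`-th column of a matrix, as a vector in Euclidean space. -/
noncomputable def colE (M : Matrix (Fin d) (Fin N) ℝ) (j : Fin N) :
    EuclideanSpace ℝ (Fin d) :=
  (WithLp.equiv 2 (Fin d → ℝ)).symm (fun i => M i j)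

lemma colE_apply (M : Matrix (Fin d) (Fin N) ℝ) (j : Fin N) (i : Fin d) :
    colE M j i = M i j := rfl

lemma spec_nonneg (M : Matrix (Fin d) (Fin N) ℝ) : 0 ≤ spec M := norm_nonneg _

lemma frob_nonneg {m n : Type*} [Fintype m] [Fintype n] (M : Matrix m n ℝ) :
    0 ≤ frob M := Real.sqrt_nonneg _

lemma frob_eq_sum_col (M : Matrix (Fin d) (Fin N) ℝ) :
    frob M = Real.sqrt (∑ j, ‖colE M j‖ ^ 2) := by
  rw [frob, Finset.sum_comm]
  congr 1
  refine Finset.sum_congr rfl fun j _ => ?_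
  rw [EuclideanSpace.norm_eq, Real.sq_sqrt (by positivity)]
  simp [colE_apply, Real.norm_eq_abs, sq_abs]

lemma colE_norm_le_spec (M : Matrix (Fin d) (Fin N) ℝ) (j : Fin N) :
    ‖colE M j‖ ≤ spec M := by
  have h : colE M j = Matrix.toEuclideanLin M (EuclideanSpace.single j 1) := by
    apply (WithLp.equiv 2 (Fin d → ℝ)).injective
    funext i
    show M i j = (M *ᵥ (WithLp.equiv 2 (Fin N → ℝ)) (EuclideanSpace.single j 1)) i
    simp [Matrix.mulVec, dotProduct, EuclideanSpace.single_apply]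
  calc ‖colE M j‖
      = ‖(LinearMap.toContinuousLinearMap (Matrix.toEuclideanLin M))
          (EuclideanSpace.single j 1)‖ := by rw [h]; rfl
    _ ≤ spec M * ‖(EuclideanSpace.single j 1 : EuclideanSpace ℝ (Fin N))‖ :=
        ContinuousLinearMap.le_opNorm _ _
    _ = spec M := by rw [EuclideanSpace.norm_single]; simp

lemma frob_le_of_col (M : Matrix (Fin d) (Fin N) ℝ) {c : ℝ} (hc : 0 ≤ c)
    (h : ∀ j, ‖colE M j‖ ≤ c) : frob M ≤ Real.sqrt N * c := by
  rw [frob_eq_sum_col]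
  have h1 : ∑ j, ‖colE M j‖ ^ 2 ≤ (N : ℝ) * c ^ 2 := by
    calc ∑ j, ‖colE M j‖ ^ 2 ≤ ∑ _j : Fin N, c ^ 2 :=
          Finset.sum_le_sum fun j _ => pow_le_pow_left₀ (norm_nonneg _) (h j) 2
      _ = (N : ℝ) * c ^ 2 := by simp [mul_comm]
  calc Real.sqrt (∑ j, ‖colE M j‖ ^ 2) ≤ Real.sqrt ((N : ℝ) * c ^ 2) :=
        Real.sqrt_le_sqrt h1
    _ = Real.sqrt N * c := by
        rw [Real.sqrt_mul (Nat.cast_nonneg N), Real.sqrt_sq hc]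

lemma frob_le_sqrt_mul_spec (M : Matrix (Fin d) (Fin N) ℝ) :
    frob M ≤ Real.sqrt N * spec M :=
  frob_le_of_col M (spec_nonneg M) (colE_norm_le_spec M)

lemma colE_mul (M : Matrix (Fin d) (Fin N) ℝ) (S : Matrix (Fin N) (Fin N) ℝ) (j : Fin N) :
    colE (M * S) j = ∑ l, S l j • colE M l := by
  apply (WithLp.equiv 2 (Fin d → ℝ)).injective
  funext i
  show (M * S) i j = ((WithLp.equiv 2 (Fin d → ℝ)) (∑ l, S l j • colE M l)) i
  have hsum : (∑ l, S l j • colE M l) i = ∑ l, (S l j • colE M l) i :=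
    by rw [WithLp.ofLp_sum]; exact Finset.sum_apply i Finset.univ _
  have : ((WithLp.equiv 2 (Fin d → ℝ)) (∑ l, S l j • colE M l)) i
      = ∑ l, S l j * M i l := by
    show (∑ l, S l j • colE M l) i = _
    rw [hsum]
    exact Finset.sum_congr rfl fun l _ => rfl
  rw [this, Matrix.mul_apply]
  exact Finset.sum_congr rfl fun l _ => mul_comm _ _

lemma frob_mul_colstoch (M : Matrix (Fin d) (Fin N) ℝ)
    {S : Matrix (Fin N) (Fin N) ℝ} (hS : ColStoch S) :
    frob (M * S) ≤ Real.sqrt N * spec M := by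
  refine frob_le_of_col _ (spec_nonneg M) fun j => ?_
  rw [colE_mul]
  calc ‖∑ l, S l j • colE M l‖ ≤ ∑ l, ‖S l j • colE M l‖ := norm_sum_le _ _
    _ = ∑ l, S l j * ‖colE M l‖ := by
        refine Finset.sum_congr rfl fun l _ => ?_
        rw [norm_smul, Real.norm_eq_abs, abs_of_nonneg (hS.1 l j)]
    _ ≤ ∑ l, S l j * spec M :=
        Finset.sum_le_sum fun l _ =>
          mul_le_mul_of_nonneg_left (colE_norm_le_spec M l) (hS.1 l j)
    _ = spec M := by rw [← Finset.sum_mul, hS.2 j, one_mul]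

/-- Frobenius norm as a Euclidean norm on the product index type. -/
noncomputable def toE (M : Matrix (Fin d) (Fin N) ℝ) : EuclideanSpace ℝ (Fin d × Fin N) :=
  (WithLp.equiv 2 (Fin d × Fin N → ℝ)).symm (fun p => M p.1 p.2)

lemma frob_eq_norm_toE (M : Matrix (Fin d) (Fin N) ℝ) : frob M = ‖toE M‖ := by
  rw [EuclideanSpace.norm_eq, frob]
  congr 1
  rw [Fintype.sum_prod_type]
  exact Finset.sum_congr rfl fun i _ => Finset.sum_congr rfl fun j _ => by
    simp [toE, Real.norm_eq_abs, sq_abs]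

lemma toE_add (A B : Matrix (Fin d) (Fin N) ℝ) : toE (A + B) = toE A + toE B := rfl

lemma frob_add_le (A B : Matrix (Fin d) (Fin N) ℝ) :
    frob (A + B) ≤ frob A + frob B := by
  rw [frob_eq_norm_toE, frob_eq_norm_toE, frob_eq_norm_toE, toE_add]
  exact norm_add_le _ _

lemma colstoch_mul {N k : ℕ} {A : Matrix (Fin N) (Fin k) ℝ} {B : Matrix (Fin k) (Fin N) ℝ}
    (hA : ColStoch A) (hB : ColStoch B) : ColStoch (A * B) := by
  constructor
  · intro i j
    rw [Matrix.mul_apply]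
    exact Finset.sum_nonneg fun l _ => mul_nonneg (hA.1 i l) (hB.1 l j)
  · intro j
    simp only [Matrix.mul_apply]
    rw [Finset.sum_comm]
    calc ∑ l, ∑ i, A i l * B l j = ∑ l, (∑ i, A i l) * B l j := by
          simp [Finset.sum_mul]
      _ = ∑ l, B l j := by simp [hA.2]
      _ = 1 := hB.2 j

lemma spec_sub_comm (A B : Matrix (Fin d) (Fin N) ℝ) :
    spec (A - B) = spec (B - A) := by
  unfold spec
  rw [← neg_sub B A, map_neg, map_neg, norm_neg]

/-- Key perturbation estimate. -/
lemma key (M M' : Matrix (Fin d) (Fin N) ℝ) {S : Matrix (Fin N) (Fin N) ℝ}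
    (hS : ColStoch S) :
    frob (M - M * S) ≤ frob (M' - M' * S) + 2 * (Real.sqrt N * spec (M - M')) := by
  have hdecomp : M - M * S = (M' - M' * S) + ((M - M') + -((M - M') * S)) := by
    rw [Matrix.sub_mul]
    abel
  calc frob (M - M * S)
      ≤ frob (M' - M' * S) + frob ((M - M') + -((M - M') * S)) := by
        rw [hdecomp]; exact frob_add_le _ _
    _ ≤ frob (M' - M' * S) + (frob (M - M') + frob (-((M - M') * S))) := by
        gcongr
        exact frob_add_le _ _
    _ ≤ frob (M' - M' * S) + 2 * (Real.sqrt N * spec (M - M')) := by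
        have h1 : frob (M - M') ≤ Real.sqrt N * spec (M - M') :=
          frob_le_sqrt_mul_spec _
        have h2 : frob (-((M - M') * S)) ≤ Real.sqrt N * spec (M - M') := by
          have : frob (-((M - M') * S)) = frob ((M - M') * S) := by
            unfold frob; congr 1
            exact Finset.sum_congr rfl fun i _ => Finset.sum_congr rfl fun j _ => by
              simp
          rw [this]
          exact frob_mul_colstoch _ hS
        linarith

end AAaux

open AAaux

/-- Archetypal analysis applied to a `(1+ε)` rank-`p` approximation `X̃_p` of `X`
yields `(1/√N)‖X − XÃB̃‖_F ≤ opt(X) + 4(1+ε)σ_{p+1}(X)`. -/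
theorem aa_approx_lowrank {d N k : ℕ} (p : ℕ) (ε : ℝ) (hε : 0 < ε)
    (X Xtp : Matrix (Fin d) (Fin N) ℝ)
    (hrank : Xtp.rank ≤ p) (happrox : spec (X - Xtp) ≤ (1 + ε) * sigmaSucc p X)
    (At : Matrix (Fin N) (Fin k) ℝ) (Bt : Matrix (Fin k) (Fin N) ℝ)
    (hAt : ColStoch At) (hBt : ColStoch Bt)
    (hmin : ∀ A : Matrix (Fin N) (Fin k) ℝ, ∀ B : Matrix (Fin k) (Fin N) ℝ,
      ColStoch A → ColStoch B →
      frob (Xtp - Xtp * At * Bt) ≤ frob (Xtp - Xtp * A * B)) :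
    (1 / Real.sqrt N) * frob (X - X * At * Bt)
      ≤ opt k X + 4 * (1 + ε) * sigmaSucc p X := by
  have hσ0 : 0 ≤ sigmaSucc p X :=
    Real.sInf_nonneg (by rintro c ⟨Y, -, rfl⟩; exact spec_nonneg _)
  have hopt0 : 0 ≤ opt k X :=
    Real.sInf_nonneg (by
      rintro c ⟨A, B, hA, hB, rfl⟩
      exact mul_nonneg (by positivity) (frob_nonneg _))
  have hs0 : 0 ≤ spec (X - Xtp) := spec_nonneg _
  have hσ'0 : 0 ≤ (1 + ε) * sigmaSucc p X := mul_nonneg (by linarith) hσ0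
  rcases Nat.eq_zero_or_pos N with hN | hN
  · subst hN
    simp only [Nat.cast_zero, Real.sqrt_zero, div_zero, zero_mul]
    linarith
  have hsN : (0 : ℝ) < Real.sqrt N := Real.sqrt_pos.2 (by exact_mod_cast hN)
  set S := At * Bt with hSdef
  have hSstoch : ColStoch S := colstoch_mul hAt hBt
  have hassoc : X * At * Bt = X * S := Matrix.mul_assoc _ _ _
  have hassoc' : Xtp * At * Bt = Xtp * S := Matrix.mul_assoc _ _ _
  -- Step 1
  have h1 : frob (X - X * S) ≤ frob (Xtp - Xtp * S)
      + 2 * (Real.sqrt N * spec (X - Xtp)) := key X Xtp hSstoch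
  -- Step 2: bound the minimized quantity by opt
  have hopt : (1 / Real.sqrt N) * frob (Xtp - Xtp * S)
      ≤ opt k X + 2 * ((1 + ε) * sigmaSucc p X) := by
    rw [← sub_le_iff_le_add]
    refine le_csInf ⟨_, At, Bt, hAt, hBt, rfl⟩ ?_
    rintro c ⟨A, B, hA, hB, rfl⟩
    rw [sub_le_iff_le_add]
    have hAB : ColStoch (A * B) := colstoch_mul hA hB
    have hmin' : frob (Xtp - Xtp * S) ≤ frob (Xtp - Xtp * (A * B)) := by
      rw [← hassoc', ← Matrix.mul_assoc]
      exact hmin A B hA hB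
    have h2 : frob (Xtp - Xtp * (A * B)) ≤ frob (X - X * (A * B))
        + 2 * (Real.sqrt N * spec (Xtp - X)) := key Xtp X hAB
    rw [spec_sub_comm] at h2
    have hchain : frob (Xtp - Xtp * S) ≤ frob (X - X * A * B)
        + 2 * (Real.sqrt N * spec (X - Xtp)) := by
      rw [Matrix.mul_assoc]
      linarith
    have hmul := mul_le_mul_of_nonneg_left hchain (le_of_lt (one_div_pos.2 hsN))
    calc (1 / Real.sqrt N) * frob (Xtp - Xtp * S)
        ≤ (1 / Real.sqrt N) * (frob (X - X * A * B)
            + 2 * (Real.sqrt N * spec (X - Xtp))) := hmul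
      _ = (1 / Real.sqrt N) * frob (X - X * A * B) + 2 * spec (X - Xtp) := by
          field_simp
      _ ≤ (1 / Real.sqrt N) * frob (X - X * A * B)
            + 2 * ((1 + ε) * sigmaSucc p X) := by linarith
  -- Combine
  have hmul1 := mul_le_mul_of_nonneg_left h1 (le_of_lt (one_div_pos.2 hsN))
  have heq : (1 / Real.sqrt N) * (frob (Xtp - Xtp * S)
      + 2 * (Real.sqrt N * spec (X - Xtp)))
      = (1 / Real.sqrt N) * frob (Xtp - Xtp * S) + 2 * spec (X - Xtp) := by
    field_simp
  rw [hassoc]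
  calc (1 / Real.sqrt N) * frob (X - X * S)
      ≤ (1 / Real.sqrt N) * frob (Xtp - Xtp * S) + 2 * spec (X - Xtp) := by
        rw [← heq]; exact hmul1
    _ ≤ opt k X + 2 * ((1 + ε) * sigmaSucc p X) + 2 * ((1 + ε) * sigmaSucc p X) := by
        linarith
    _ = opt k X + 4 * (1 + ε) * sigmaSucc p X := by ring
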